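/- Consider noisy linear regression tasks: let X = {x ∈ ℝ^d : ‖x‖ ≤ 1}, Y = [−1, 1], H = {x ↦ Bᵀx : B ∈ ℝ^{d×k}, BᵀB = I_k}, and F = {z ↦ wᵀz : w ∈ ℝ^k, ‖w‖ ≤ 1/2}. Let μ be a probability measure on X whose second-moment matrix Σ = ∫ x xᵀ dμ satisfies c₁·I_d ⪯ Σ ⪯ c₂·I_d for constants 0 < c₁ ≤ c₂, and let ν be a probability measure on [−1/2, 1/2] with mean zero. For each (B, w), let P_{B,w} be the distribution of (x, wᵀBᵀx + η) with x ∼ μ and η ∼ ν independent, and let ℓ(y', y) = ¼(y' − y)². Then there exists a constant C > 0 depending only on c₁ and c₂ such that for every ε ∈ (0, 1), the ε-task-eluder dimension satisfies dim(H, F, ε) ≤ C·k·log(1/ε). -/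

import Mathlib

open MeasureTheory Matrix

/-- Euclidean norm of a vector in `ℝ^m`. -/
noncomputable def l2norm {m : ℕ} (v : Fin m → ℝ) : ℝ := Real.sqrt (∑ i, v i ^ 2)

/-- The data distribution of the noisy linear regression task with parameters `(B, w)`:
the law of `(x, wᵀBᵀx + η)` where `x ∼ μ` and `η ∼ ν` independently. -/
noncomputable def regP {d k : ℕ} (μ : Measure (Fin d → ℝ)) (ν : Measure ℝ)
    (B : Matrix (Fin d) (Fin k) ℝ) (w : Fin k → ℝ) : Measure ((Fin d → ℝ) × ℝ) :=
  Measure.map (fun q : (Fin d → ℝ) × ℝ => (q.1, w ⬝ᵥ (Bᵀ *ᵥ q.1) + q.2)) (μ.prod ν)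

/-- The excess risk of the predictor with parameters `(B', w')` over the one with parameters
`(B, w)` for the loss `ℓ(y', y) = ¼(y' − y)²` under the task distribution `P_{B,w}`. -/
noncomputable def regExcess {d k : ℕ} (μ : Measure (Fin d → ℝ)) (ν : Measure ℝ)
    (B : Matrix (Fin d) (Fin k) ℝ) (w : Fin k → ℝ)
    (B' : Matrix (Fin d) (Fin k) ℝ) (w' : Fin k → ℝ) : ℝ :=
  ∫ xy, ((w' ⬝ᵥ (B'ᵀ *ᵥ xy.1) - xy.2) ^ 2 / 4 - (w ⬝ᵥ (Bᵀ *ᵥ xy.1) - xy.2) ^ 2 / 4)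
    ∂(regP μ ν B w)

/-- `ε`-independence of the task `(B, w j)` from its predecessors `(B, w i)`, `i < j`, with
respect to `H = {x ↦ Bᵀx : BᵀB = I_k}` and `F = {z ↦ wᵀz : ‖w‖ ≤ 1/2}`. -/
def regEpsIndepAt {d k n : ℕ} (μ : Measure (Fin d → ℝ)) (ν : Measure ℝ) (ε : ℝ)
    (B : Matrix (Fin d) (Fin k) ℝ) (w : Fin n → Fin k → ℝ) (j : Fin n) : Prop :=
  ∃ B' : Matrix (Fin d) (Fin k) ℝ, B'ᵀ * B' = 1 ∧
    ∃ w' : Fin n → Fin k → ℝ, (∀ i, l2norm (w' i) ≤ 1 / 2) ∧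
      (∑ i ∈ Finset.univ.filter (fun i : Fin n => i < j),
          regExcess μ ν B (w i) B' (w' i)) ≤ ε ∧
      ∀ v : Fin k → ℝ, l2norm v ≤ 1 / 2 → ε / 2 < regExcess μ ν B (w j) B' v


section aux

lemma sumsq_nonneg {m : ℕ} (v : Fin m → ℝ) : 0 ≤ ∑ i, v i ^ 2 :=
  Finset.sum_nonneg fun _ _ => sq_nonneg _

lemma sumsq_le_of_l2norm {m : ℕ} {v : Fin m → ℝ} {a : ℝ} (h : l2norm v ≤ a) :
    ∑ i, v i ^ 2 ≤ a ^ 2 := by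
  rw [l2norm] at h
  have := Real.sq_sqrt (sumsq_nonneg v)
  nlinarith [Real.sqrt_nonneg (∑ i, v i ^ 2)]

lemma l2norm_le_of_sumsq {m : ℕ} {v : Fin m → ℝ} {a : ℝ} (ha : 0 ≤ a) (h : ∑ i, v i ^ 2 ≤ a ^ 2) :
    l2norm v ≤ a := by
  rw [l2norm, show a ^ 2 = a * a by ring] at *
  exact Real.sqrt_le_sqrt h |>.trans (by rw [Real.sqrt_mul_self ha])

lemma dot_sq_le {m : ℕ} (u v : Fin m → ℝ) :
    (u ⬝ᵥ v) ^ 2 ≤ (∑ i, u i ^ 2) * (∑ i, v i ^ 2) :=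
  Finset.sum_mul_sq_le_sq_mul_sq Finset.univ u v

lemma dotProduct_self_eq {m : ℕ} (v : Fin m → ℝ) : v ⬝ᵥ v = ∑ i, v i ^ 2 := by
  simp [dotProduct, pow_two]

lemma measurable_dot {d : ℕ} (u : Fin d → ℝ) : Measurable (fun x : Fin d → ℝ => u ⬝ᵥ x) := by
  simp only [dotProduct]
  exact Finset.measurable_sum _ fun i _ => (measurable_pi_apply i).const_mul _

lemma ae_dot_sq_le {d : ℕ} {μ : Measure (Fin d → ℝ)} (hx : ∀ᵐ x ∂μ, l2norm x ≤ 1)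
    (u : Fin d → ℝ) : ∀ᵐ x ∂μ, (u ⬝ᵥ x) ^ 2 ≤ ∑ i, u i ^ 2 := by
  filter_upwards [hx] with x hx1
  calc (u ⬝ᵥ x) ^ 2 ≤ (∑ i, u i ^ 2) * (∑ i, x i ^ 2) := dot_sq_le u x
  _ ≤ (∑ i, u i ^ 2) * 1 := by
      exact mul_le_mul_of_nonneg_left (by simpa using sumsq_le_of_l2norm hx1) (sumsq_nonneg u)
  _ = _ := mul_one _

lemma integrable_dot_sq {d : ℕ} {μ : Measure (Fin d → ℝ)} [IsProbabilityMeasure μ]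
    (hx : ∀ᵐ x ∂μ, l2norm x ≤ 1) (u : Fin d → ℝ) :
    Integrable (fun x => (u ⬝ᵥ x) ^ 2) μ := by
  refine Integrable.mono' (integrable_const (∑ i, u i ^ 2)) (((measurable_dot u).pow_const 2).aestronglyMeasurable) ?_
  filter_upwards [ae_dot_sq_le hx u] with x h
  rwa [Real.norm_eq_abs, abs_of_nonneg (sq_nonneg _)]

lemma integral_dot_sq_le {d : ℕ} {μ : Measure (Fin d → ℝ)} [IsProbabilityMeasure μ]
    (hx : ∀ᵐ x ∂μ, l2norm x ≤ 1) (u : Fin d → ℝ) :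
    ∫ x, (u ⬝ᵥ x) ^ 2 ∂μ ≤ ∑ i, u i ^ 2 := by
  calc ∫ x, (u ⬝ᵥ x) ^ 2 ∂μ ≤ ∫ _, (∑ i, u i ^ 2) ∂μ :=
        integral_mono_ae (integrable_dot_sq hx u) (integrable_const _) (ae_dot_sq_le hx u)
  _ = ∑ i, u i ^ 2 := by simp

-- transpose-dot helper
lemma dot_mulVec_transpose {d k : ℕ} (B : Matrix (Fin d) (Fin k) ℝ) (x : Fin d → ℝ)
    (w : Fin k → ℝ) : w ⬝ᵥ (Bᵀ *ᵥ x) = (B *ᵥ w) ⬝ᵥ x := by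
  rw [Matrix.mulVec_transpose, dotProduct_comm, dotProduct_comm (B *ᵥ w) x,
    Matrix.dotProduct_mulVec]

-- orthonormal columns preserve dot products
lemma mulVec_dot_mulVec {d k : ℕ} {B : Matrix (Fin d) (Fin k) ℝ} (hB : Bᵀ * B = 1)
    (v u : Fin k → ℝ) : (B *ᵥ v) ⬝ᵥ (B *ᵥ u) = v ⬝ᵥ u := by
  rw [Matrix.dotProduct_mulVec, ← Matrix.mulVec_transpose, Matrix.mulVec_mulVec, hB, Matrix.one_mulVec]

lemma integrable_coord_mul {d : ℕ} {μ : Measure (Fin d → ℝ)} [IsProbabilityMeasure μ]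
    (hx : ∀ᵐ x ∂μ, l2norm x ≤ 1) (i j : Fin d) :
    Integrable (fun x => x i * x j) μ := by
  refine Integrable.mono' (integrable_const 1) (((measurable_pi_apply i).mul (measurable_pi_apply j)).aestronglyMeasurable) ?_
  filter_upwards [hx] with x hx1
  have h := sumsq_le_of_l2norm hx1
  have hi : ∀ t : Fin d, x t ^ 2 ≤ 1 := fun t => le_trans
    (Finset.single_le_sum (f := fun s => x s ^ 2) (fun _ _ => sq_nonneg _) (Finset.mem_univ t)) (by simpa using h)
  have : |x i * x j| = |x i| * |x j| := abs_mul _ _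
  rw [Real.norm_eq_abs, this]
  nlinarith [abs_nonneg (x i), abs_nonneg (x j), sq_abs (x i), sq_abs (x j), hi i, hi j]

-- quadratic form identity
lemma integral_dot_sq_eq {d : ℕ} {μ : Measure (Fin d → ℝ)} [IsProbabilityMeasure μ]
    (hx : ∀ᵐ x ∂μ, l2norm x ≤ 1) (u : Fin d → ℝ) :
    ∫ x, (u ⬝ᵥ x) ^ 2 ∂μ
      = u ⬝ᵥ ((Matrix.of fun i j : Fin d => ∫ x, x i * x j ∂μ) *ᵥ u) := by
  have hexp : ∀ x : Fin d → ℝ, (u ⬝ᵥ x) ^ 2 = ∑ i, ∑ j, (u i * u j) * (x i * x j) := by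
    intro x
    rw [dotProduct, pow_two, Finset.sum_mul_sum]
    congr 1; ext i; congr 1; ext j; ring
  simp_rw [hexp]
  rw [integral_finset_sum]
  · have : ∀ i, ∫ x, ∑ j, (u i * u j) * (x i * x j) ∂μ
        = ∑ j, (u i * u j) * ∫ x, x i * x j ∂μ := by
      intro i
      rw [integral_finset_sum]
      · exact Finset.sum_congr rfl fun j _ => integral_const_mul _ _
      · exact fun j _ => (integrable_coord_mul hx i j).const_mul _
    simp_rw [this]
    rw [dotProduct]
    refine Finset.sum_congr rfl fun i _ => ?_
    rw [Matrix.mulVec, dotProduct, Finset.mul_sum]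
    refine Finset.sum_congr rfl fun j _ => ?_
    simp only [Matrix.of_apply]
    ring
  · exact fun i _ => integrable_finset_sum _ fun j _ => (integrable_coord_mul hx i j).const_mul _

lemma quadform_lower {d : ℕ} {Sm : Matrix (Fin d) (Fin d) ℝ} {c₁ : ℝ}
    (h : (Sm - c₁ • (1 : Matrix (Fin d) (Fin d) ℝ)).PosSemidef) (u : Fin d → ℝ) :
    c₁ * (∑ i, u i ^ 2) ≤ u ⬝ᵥ (Sm *ᵥ u) := by
  have h2 := h.dotProduct_mulVec_nonneg u
  simp only [Matrix.sub_mulVec, dotProduct_sub, Matrix.smul_mulVec, Matrix.one_mulVec,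
    dotProduct_smul, star_trivial] at h2
  have : u ⬝ᵥ u = ∑ i, u i ^ 2 := by simp [dotProduct, pow_two]
  rw [this] at h2
  simp only [smul_eq_mul] at h2
  linarith

lemma measurable_dotT {d k : ℕ} (B : Matrix (Fin d) (Fin k) ℝ) (w : Fin k → ℝ) :
    Measurable (fun x : Fin d → ℝ => w ⬝ᵥ (Bᵀ *ᵥ x)) := by
  have : (fun x : Fin d → ℝ => w ⬝ᵥ (Bᵀ *ᵥ x)) = fun x => (B *ᵥ w) ⬝ᵥ x := by
    funext x; exact dot_mulVec_transpose B x w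
  rw [this]; exact measurable_dot _

lemma regExcess_eq {d k : ℕ} {μ : Measure (Fin d → ℝ)} {ν : Measure ℝ}
    [IsProbabilityMeasure μ] [IsProbabilityMeasure ν]
    (hx : ∀ᵐ x ∂μ, l2norm x ≤ 1) (he : ∀ᵐ e ∂ν, |e| ≤ 1 / 2)
    (hmean : ∫ e, e ∂ν = 0)
    (B B' : Matrix (Fin d) (Fin k) ℝ) (w w' : Fin k → ℝ) :
    regExcess μ ν B w B' w'
      = (∫ x, (((B' *ᵥ w') - (B *ᵥ w)) ⬝ᵥ x) ^ 2 ∂μ) / 4 := by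
  set u : Fin d → ℝ := B' *ᵥ w' - B *ᵥ w with hu
  have hg : Measurable (fun q : (Fin d → ℝ) × ℝ => (q.1, w ⬝ᵥ (Bᵀ *ᵥ q.1) + q.2)) :=
    measurable_fst.prodMk (((measurable_dotT B w).comp measurable_fst).add measurable_snd)
  have hF : Measurable (fun xy : (Fin d → ℝ) × ℝ =>
      (w' ⬝ᵥ (B'ᵀ *ᵥ xy.1) - xy.2) ^ 2 / 4 - (w ⬝ᵥ (Bᵀ *ᵥ xy.1) - xy.2) ^ 2 / 4) := by
    refine Measurable.sub ?_ ?_ <;>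
    exact ((((measurable_dotT _ _).comp measurable_fst).sub measurable_snd).pow_const 2).div_const 4
  rw [regExcess, regP, integral_map hg.aemeasurable hF.aestronglyMeasurable]
  have key : (fun q : (Fin d → ℝ) × ℝ =>
      (w' ⬝ᵥ (B'ᵀ *ᵥ q.1) - (w ⬝ᵥ (Bᵀ *ᵥ q.1) + q.2)) ^ 2 / 4
        - (w ⬝ᵥ (Bᵀ *ᵥ q.1) - (w ⬝ᵥ (Bᵀ *ᵥ q.1) + q.2)) ^ 2 / 4)
      = fun q => (u ⬝ᵥ q.1) ^ 2 / 4 - ((u ⬝ᵥ q.1) / 2) * q.2 := by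
    funext q
    have h1 := dot_mulVec_transpose B q.1 w
    have h2 := dot_mulVec_transpose B' q.1 w'
    have h3 : u ⬝ᵥ q.1 = (B' *ᵥ w') ⬝ᵥ q.1 - (B *ᵥ w) ⬝ᵥ q.1 := by
      rw [hu, sub_dotProduct]
    rw [h1, h2, h3]; ring
  rw [key]
  set S : ℝ := ∑ i, u i ^ 2 with hS
  have haefst : ∀ᵐ q ∂(μ.prod ν), (u ⬝ᵥ q.1) ^ 2 ≤ S :=
    Measure.quasiMeasurePreserving_fst.ae (ae_dot_sq_le hx u)
  have haesnd : ∀ᵐ q ∂(μ.prod ν), |(q.2 : ℝ)| ≤ 1 / 2 :=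
    Measure.quasiMeasurePreserving_snd.ae he
  have hm1 : Measurable (fun q : (Fin d → ℝ) × ℝ => (u ⬝ᵥ q.1) ^ 2 / 4) :=
    (((measurable_dot u).comp measurable_fst).pow_const 2).div_const 4
  have hm2 : Measurable (fun q : (Fin d → ℝ) × ℝ => ((u ⬝ᵥ q.1) / 2) * q.2) :=
    (((measurable_dot u).comp measurable_fst).div_const 2).mul measurable_snd
  have hI1 : Integrable (fun q : (Fin d → ℝ) × ℝ => (u ⬝ᵥ q.1) ^ 2 / 4) (μ.prod ν) := by
    refine Integrable.mono' (integrable_const (S / 4)) hm1.aestronglyMeasurable ?_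
    filter_upwards [haefst] with q hq
    rw [Real.norm_eq_abs, abs_of_nonneg (by positivity)]
    linarith
  have hI2 : Integrable (fun q : (Fin d → ℝ) × ℝ => ((u ⬝ᵥ q.1) / 2) * q.2) (μ.prod ν) := by
    refine Integrable.mono' (integrable_const (Real.sqrt S / 4)) hm2.aestronglyMeasurable ?_
    filter_upwards [haefst, haesnd] with q hq1 hq2
    have habs : |u ⬝ᵥ q.1| ≤ Real.sqrt S := by
      rw [← Real.sqrt_sq_eq_abs]
      exact Real.sqrt_le_sqrt hq1
    rw [Real.norm_eq_abs, abs_mul, abs_div]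
    have h0 : (0:ℝ) ≤ |u ⬝ᵥ q.1| := abs_nonneg _
    calc |u ⬝ᵥ q.1| / |(2:ℝ)| * |q.2| ≤ Real.sqrt S / 2 * (1/2) := by
          rw [abs_two]
          exact mul_le_mul (by linarith [habs]) hq2 (abs_nonneg _) (by positivity)
    _ = Real.sqrt S / 4 := by ring
  rw [integral_sub hI1 hI2]
  have e2 : ∫ q : (Fin d → ℝ) × ℝ, ((u ⬝ᵥ q.1) / 2) * q.2 ∂(μ.prod ν) = 0 := by
    rw [integral_prod_mul (fun x => (u ⬝ᵥ x) / 2) (fun e => e), hmean, mul_zero]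
  have e1 : ∫ q : (Fin d → ℝ) × ℝ, (u ⬝ᵥ q.1) ^ 2 / 4 ∂(μ.prod ν)
      = ∫ x, (u ⬝ᵥ x) ^ 2 / 4 ∂μ := by
    have hmap : Measure.map Prod.fst (μ.prod ν) = μ := by
      rw [Measure.map_fst_prod]; simp
    have hfm : AEStronglyMeasurable (fun x : Fin d → ℝ => (u ⬝ᵥ x) ^ 2 / 4)
        (Measure.map Prod.fst (μ.prod ν)) :=
      (((measurable_dot u).pow_const 2).div_const 4).aestronglyMeasurable
    have h := integral_map (φ := Prod.fst) (μ := μ.prod ν) measurable_fst.aemeasurable hfm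
    rw [hmap] at h
    exact h.symm
  rw [e1, e2, sub_zero, integral_div]

lemma vecMulVec_mulVec {k : ℕ} (a b x : Fin k → ℝ) :
    (vecMulVec a b) *ᵥ x = (b ⬝ᵥ x) • a := by
  funext i
  simp only [Matrix.mulVec, vecMulVec_apply, dotProduct, Pi.smul_apply, smul_eq_mul,
    Finset.sum_mul]
  exact Finset.sum_congr rfl fun j _ => by ring

lemma dot_vecMulVec_self {k : ℕ} (a x : Fin k → ℝ) :
    x ⬝ᵥ ((vecMulVec a a) *ᵥ x) = (a ⬝ᵥ x) ^ 2 := by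
  rw [vecMulVec_mulVec, dotProduct_smul, smul_eq_mul, pow_two, dotProduct_comm]

-- Cauchy-Schwarz wrt a PD matrix
lemma dot_sq_le_quadform_mul_inv {k : ℕ} {M : Matrix (Fin k) (Fin k) ℝ} (hM : M.PosDef)
    (r v : Fin k → ℝ) :
    (r ⬝ᵥ v) ^ 2 ≤ (r ⬝ᵥ (M *ᵥ r)) * (v ⬝ᵥ (M⁻¹ *ᵥ v)) := by
  have hdet : IsUnit M.det := hM.det_pos.ne'.isUnit
  have hMinv : M * M⁻¹ = 1 := Matrix.mul_nonsing_inv M hdet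
  have hMsymm : Mᵀ = M := hM.1
  set z : Fin k → ℝ := M⁻¹ *ᵥ v with hz
  have hMz : M *ᵥ z = v := by rw [hz, Matrix.mulVec_mulVec, hMinv, Matrix.one_mulVec]
  have hq : ∀ t : ℝ, 0 ≤ (r ⬝ᵥ (M *ᵥ r)) * (t * t) + (2 * (r ⬝ᵥ v)) * t + (v ⬝ᵥ (M⁻¹ *ᵥ v)) := by
    intro t
    have h0 := hM.posSemidef.dotProduct_mulVec_nonneg (t • r + z)
    simp only [star_trivial] at h0
    have expand : (t • r + z) ⬝ᵥ (M *ᵥ (t • r + z))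
        = (r ⬝ᵥ (M *ᵥ r)) * (t * t) + (2 * (r ⬝ᵥ v)) * t + (v ⬝ᵥ (M⁻¹ *ᵥ v)) := by
      rw [Matrix.mulVec_add, Matrix.mulVec_smul]
      rw [add_dotProduct, smul_dotProduct, dotProduct_add, dotProduct_add,
        dotProduct_smul, dotProduct_smul, hMz]
      have hzMr : z ⬝ᵥ (M *ᵥ r) = r ⬝ᵥ v := by
        rw [Matrix.dotProduct_mulVec, ← Matrix.mulVec_transpose, hMsymm, hMz, dotProduct_comm]
      have hrv : r ⬝ᵥ v = r ⬝ᵥ v := rfl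
      have hzv : z ⬝ᵥ v = v ⬝ᵥ (M⁻¹ *ᵥ v) := by rw [hz, dotProduct_comm]
      rw [hzMr, hzv]
      simp only [smul_eq_mul]
      ring
    linarith [expand ▸ h0]
  have hd := discrim_le_zero hq
  rw [discrim] at hd
  nlinarith [hd]

lemma sum_mulVec' {k n : ℕ} (s : Finset (Fin n)) (A : Fin n → Matrix (Fin k) (Fin k) ℝ)
    (x : Fin k → ℝ) : (∑ i ∈ s, A i) *ᵥ x = ∑ i ∈ s, (A i *ᵥ x) := by
  funext j
  simp only [Matrix.mulVec, dotProduct, Matrix.sum_apply, Finset.sum_apply, Finset.sum_mul]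
  rw [Finset.sum_comm]

lemma dotProduct_sum' {k n : ℕ} (s : Finset (Fin n)) (x : Fin k → ℝ) (v : Fin n → Fin k → ℝ) :
    x ⬝ᵥ (∑ i ∈ s, v i) = ∑ i ∈ s, x ⬝ᵥ v i := by
  simp only [dotProduct, Finset.sum_apply, Finset.mul_sum]
  rw [Finset.sum_comm]

lemma quadform_M {k n : ℕ} (α : ℝ) (w : Fin n → Fin k → ℝ) (s : Finset (Fin n)) (x : Fin k → ℝ) :
    x ⬝ᵥ ((α • (1 : Matrix (Fin k) (Fin k) ℝ) + ∑ i ∈ s, vecMulVec (w i) (w i)) *ᵥ x)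
      = α * (x ⬝ᵥ x) + ∑ i ∈ s, (w i ⬝ᵥ x) ^ 2 := by
  rw [Matrix.add_mulVec, dotProduct_add, Matrix.smul_mulVec, Matrix.one_mulVec,
    dotProduct_smul, sum_mulVec', dotProduct_sum']
  simp only [smul_eq_mul]
  congr 1
  exact Finset.sum_congr rfl fun i _ => dot_vecMulVec_self (w i) x

lemma posdef_M {k n : ℕ} {α : ℝ} (hα : 0 < α) (w : Fin n → Fin k → ℝ) (s : Finset (Fin n)) :
    (α • (1 : Matrix (Fin k) (Fin k) ℝ) + ∑ i ∈ s, vecMulVec (w i) (w i)).PosDef := by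
  refine Matrix.PosDef.of_dotProduct_mulVec_pos ?_ ?_
  · show _ = _
    ext i j
    simp only [Matrix.conjTranspose_apply, Matrix.add_apply, Matrix.smul_apply,
      Matrix.sum_apply, vecMulVec_apply, Matrix.one_apply, star_trivial, smul_eq_mul]
    congr 1
    · by_cases h : i = j <;> simp [h, eq_comm]
    · exact Finset.sum_congr rfl fun t _ => mul_comm _ _
  · intro x hx
    rw [star_trivial, quadform_M]
    have h1 : 0 < x ⬝ᵥ x := by
      rcases lt_or_eq_of_le (Finset.sum_nonneg (fun i (_ : i ∈ Finset.univ) => mul_self_nonneg (x i))) with h | h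
      · exact h
      · exact absurd ((dotProduct_self_eq_zero).mp h.symm) hx
    have h2 : 0 ≤ ∑ i ∈ s, (w i ⬝ᵥ x) ^ 2 := Finset.sum_nonneg fun _ _ => sq_nonneg _
    nlinarith

lemma det_add_vecMulVec {k : ℕ} {M : Matrix (Fin k) (Fin k) ℝ} (hM : M.PosDef) (u : Fin k → ℝ) :
    (M + vecMulVec u u).det = M.det * (1 + u ⬝ᵥ (M⁻¹ *ᵥ u)) := by
  rw [vecMulVec_eq Unit, Matrix.det_add_replicateCol_mul_replicateRow hM.det_pos.ne'.isUnit]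
  congr 1
  rw [Matrix.det_unique, Matrix.mul_assoc, ← Matrix.replicateCol_mulVec]
  simp [Matrix.one_apply]

lemma amgm_prod_le {k : ℕ} (hk : 0 < k) (f : Fin k → ℝ) (hf : ∀ i, 0 ≤ f i) :
    ∏ i, f i ≤ ((∑ i, f i) / k) ^ k := by
  have hk' : (k : ℝ) ≠ 0 := Nat.cast_ne_zero.mpr hk.ne'
  have h := Real.geom_mean_le_arith_mean_weighted Finset.univ (fun _ => (k : ℝ)⁻¹) f
    (fun _ _ => by positivity) (by simp [Finset.card_univ]; field_simp) (fun i _ => hf i)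
  have hprod : ∏ i, f i ^ ((k : ℝ)⁻¹) = (∏ i, f i) ^ ((k : ℝ)⁻¹) :=
    Real.finset_prod_rpow Finset.univ f (fun i _ => hf i) _
  rw [hprod] at h
  have hsum : ∑ i : Fin k, (k : ℝ)⁻¹ * f i = (∑ i, f i) / k := by
    rw [← Finset.mul_sum]; field_simp
  rw [hsum] at h
  have hprodnn : 0 ≤ ∏ i, f i := Finset.prod_nonneg fun i _ => hf i
  calc ∏ i, f i = (((∏ i, f i) ^ ((k : ℝ)⁻¹)) ^ (k : ℕ)) := by
        rw [← Real.rpow_natCast ((∏ i, f i) ^ ((k:ℝ)⁻¹)) k, ← Real.rpow_mul hprodnn,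
          inv_mul_cancel₀ hk', Real.rpow_one]
  _ ≤ ((∑ i, f i) / k) ^ k := pow_le_pow_left₀ (Real.rpow_nonneg hprodnn _) h k

lemma det_le_trace_div_pow {k : ℕ} (hk : 0 < k) {M : Matrix (Fin k) (Fin k) ℝ} (hM : M.PosDef) :
    M.det ≤ (M.trace / k) ^ k := by
  have hH : M.IsHermitian := hM.1
  have htr : M.trace = ∑ i, hH.eigenvalues i := by
    exact hH.trace_eq_sum_eigenvalues
  have hdet : M.det = ∏ i, hH.eigenvalues i := by
    rw [hH.det_eq_prod_eigenvalues]; simp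
  rw [htr, hdet]
  exact amgm_prod_le hk _ fun i => (hM.eigenvalues_pos i).le

lemma elliptic_potential {k n : ℕ} {α β : ℝ} (hα : 0 < α) (hβ : 0 < β)
    (w : Fin n → Fin k → ℝ) (hw : ∀ i, ∑ t, w i t ^ 2 ≤ 1 / 4)
    (r : Fin n → Fin k → ℝ) (hr : ∀ j, ∑ t, r j t ^ 2 ≤ 1)
    (hind : ∀ j : Fin n,
      ∑ i ∈ Finset.univ.filter (fun i : Fin n => i < j), (r j ⬝ᵥ w i) ^ 2 ≤ α)
    (hnew : ∀ j : Fin n, β < (r j ⬝ᵥ w j) ^ 2) :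
    (n : ℝ) * Real.log (1 + β / (2 * α)) ≤ (k : ℝ) * Real.log (1 + (n : ℝ) / (4 * k * α)) := by
  rcases Nat.eq_zero_or_pos k with hk | hk
  · subst hk
    rcases Nat.eq_zero_or_pos n with hn | hn
    · subst hn; simp
    · exfalso
      have h0 : (r ⟨0, hn⟩ ⬝ᵥ w ⟨0, hn⟩) = 0 := by
        simp [dotProduct]
      have := hnew ⟨0, hn⟩
      rw [h0] at this
      nlinarith
  have hkR : (0 : ℝ) < k := Nat.cast_pos.mpr hk
  set ρ := β / (2 * α) with hρ
  have hρpos : 0 < ρ := by positivity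
  set S : ℕ → Finset (Fin n) := fun m => Finset.univ.filter (fun i : Fin n => (i : ℕ) < m)
    with hSdef
  set M : ℕ → Matrix (Fin k) (Fin k) ℝ :=
    fun m => α • (1 : Matrix (Fin k) (Fin k) ℝ) + ∑ i ∈ S m, vecMulVec (w i) (w i) with hMdef
  have hPD : ∀ m, (M m).PosDef := fun m => posdef_M hα w (S m)
  have hstep : ∀ m : ℕ, m < n → (M m).det * (1 + ρ) ≤ (M (m + 1)).det := by
    intro m hm
    set j : Fin n := ⟨m, hm⟩ with hj
    have hSsucc : S (m + 1) = insert j (S m) := by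
      ext i
      simp only [hSdef, Finset.mem_filter, Finset.mem_univ, true_and, Finset.mem_insert,
        Fin.ext_iff, hj]
      omega
    have hjS : j ∉ S m := by simp [hSdef, hj]
    have hM1 : M (m + 1) = M m + vecMulVec (w j) (w j) := by
      simp only [hMdef, hSsucc, Finset.sum_insert hjS]
      abel
    rw [hM1, det_add_vecMulVec (hPD m)]
    have hCS := dot_sq_le_quadform_mul_inv (hPD m) (r j) (w j)
    have hq : r j ⬝ᵥ (M m *ᵥ r j) ≤ 2 * α := by
      rw [hMdef, quadform_M]
      have h1 : r j ⬝ᵥ r j ≤ 1 := by rw [dotProduct_self_eq]; exact hr j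
      have h2 : ∑ i ∈ S m, (w i ⬝ᵥ r j) ^ 2 ≤ α := by
        have hSj : S m = Finset.univ.filter (fun i : Fin n => i < j) := by
          ext i; simp [hSdef, Fin.lt_def, hj]
        rw [hSj]
        calc ∑ i ∈ Finset.univ.filter (fun i : Fin n => i < j), (w i ⬝ᵥ r j) ^ 2
            = ∑ i ∈ Finset.univ.filter (fun i : Fin n => i < j), (r j ⬝ᵥ w i) ^ 2 := by
              exact Finset.sum_congr rfl fun i _ => by rw [dotProduct_comm]
        _ ≤ α := hind j
      nlinarith
    have hqnn : 0 ≤ r j ⬝ᵥ (M m *ᵥ r j) := by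
      have := (hPD m).posSemidef.dotProduct_mulVec_nonneg (r j)
      simpa using this
    have hwnn : 0 ≤ w j ⬝ᵥ ((M m)⁻¹ *ᵥ w j) := by
      have := ((hPD m).inv).posSemidef.dotProduct_mulVec_nonneg (w j)
      simpa using this
    have hβlt : β < (r j ⬝ᵥ w j) ^ 2 := hnew j
    have hkey : ρ ≤ w j ⬝ᵥ ((M m)⁻¹ *ᵥ w j) := by
      rw [hρ, div_le_iff₀ (by positivity)]
      nlinarith
    have hdetpos := (hPD m).det_pos
    nlinarith
  have hdetlb : ∀ m : ℕ, m ≤ n → α ^ k * (1 + ρ) ^ m ≤ (M m).det := by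
    intro m
    induction m with
    | zero =>
      intro _
      have hS0 : S 0 = ∅ := by ext i; simp [hSdef]
      simp only [hMdef, hS0, Finset.sum_empty, add_zero, pow_zero, mul_one]
      rw [Matrix.det_smul, Matrix.det_one, mul_one]
      simp
    | succ m ih =>
      intro hm
      have hmn : m < n := Nat.lt_of_succ_le hm
      have h1 := ih hmn.le
      have h2 := hstep m hmn
      have hfac : (0:ℝ) ≤ 1 + ρ := by positivity
      calc α ^ k * (1 + ρ) ^ (m + 1) = (α ^ k * (1 + ρ) ^ m) * (1 + ρ) := by ring
      _ ≤ (M m).det * (1 + ρ) := mul_le_mul_of_nonneg_right h1 hfac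
      _ ≤ (M (m + 1)).det := h2
  have h1tr : ∀ i : Fin n, (vecMulVec (w i) (w i)).trace = ∑ t, w i t ^ 2 := by
    intro i
    simp [Matrix.trace, Matrix.diag, vecMulVec_apply, pow_two]
  have htr_eq : (M n).trace = α * k + ∑ i ∈ S n, (vecMulVec (w i) (w i)).trace := by
    rw [hMdef]
    simp only [Matrix.trace_add, Matrix.trace_smul, Matrix.trace_one, Matrix.trace_sum]
    simp [smul_eq_mul]
  have htr0 : 0 ≤ (M n).trace := by
    rw [htr_eq]
    have : 0 ≤ ∑ i ∈ S n, (vecMulVec (w i) (w i)).trace := by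
      refine Finset.sum_nonneg fun i _ => ?_
      rw [h1tr i]
      exact Finset.sum_nonneg fun t _ => sq_nonneg _
    nlinarith
  have htr : (M n).trace ≤ α * k + n / 4 := by
    rw [htr_eq]
    have h1 := h1tr
    have h2 : ∑ i ∈ S n, (vecMulVec (w i) (w i)).trace ≤ (n : ℝ) / 4 := by
      calc ∑ i ∈ S n, (vecMulVec (w i) (w i)).trace ≤ ∑ i ∈ S n, (1 / 4 : ℝ) := by
            refine Finset.sum_le_sum fun i _ => ?_
            rw [h1 i]; exact hw i
      _ = (S n).card * (1 / 4 : ℝ) := by rw [Finset.sum_const]; simp [nsmul_eq_mul]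
      _ ≤ (n : ℝ) / 4 := by
            have hc : (S n).card ≤ n := le_trans (Finset.card_le_univ _) (by simp)
            have : ((S n).card : ℝ) ≤ n := Nat.cast_le.mpr hc
            linarith
    linarith
  have hub : (M n).det ≤ (α + (n : ℝ) / (4 * k)) ^ k := by
    calc (M n).det ≤ ((M n).trace / k) ^ k := det_le_trace_div_pow hk (hPD n)
    _ ≤ (α + (n : ℝ) / (4 * k)) ^ k := by
        apply pow_le_pow_left₀
        · positivity
        · rw [div_le_iff₀ hkR]
          calc (M n).trace ≤ α * k + n / 4 := htr
          _ = (α + (n : ℝ) / (4 * k)) * k := by field_simp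
  -- combine
  have hchain : α ^ k * (1 + ρ) ^ n ≤ (α + (n : ℝ) / (4 * k)) ^ k :=
    le_trans (hdetlb n le_rfl) hub
  have hLpos : (0:ℝ) < α ^ k * (1 + ρ) ^ n := by positivity
  have hRpos : (0:ℝ) < (α + (n : ℝ) / (4 * k)) ^ k := lt_of_lt_of_le hLpos hchain
  have hlog := Real.log_le_log hLpos hchain
  rw [Real.log_mul (by positivity) (by positivity), Real.log_pow, Real.log_pow, Real.log_pow] at hlog
  have hαn : (0:ℝ) < α + (n : ℝ) / (4 * k) := by positivity
  have hfinal : (n : ℝ) * Real.log (1 + ρ)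
      ≤ (k : ℝ) * (Real.log (α + (n : ℝ) / (4 * k)) - Real.log α) := by
    have := hlog
    push_cast at this ⊢
    nlinarith [this]
  calc (n : ℝ) * Real.log (1 + ρ)
      ≤ (k : ℝ) * (Real.log (α + (n : ℝ) / (4 * k)) - Real.log α) := hfinal
  _ = (k : ℝ) * Real.log ((α + (n : ℝ) / (4 * k)) / α) := by
      rw [Real.log_div hαn.ne' hα.ne']
  _ = (k : ℝ) * Real.log (1 + (n : ℝ) / (4 * k * α)) := by
      congr 2
      field_simp

lemma final_algebra (c₁ : ℝ) (hc₁ : 0 < c₁) :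
    ∃ C : ℝ, 0 < C ∧ ∀ (k n : ℕ), 1 ≤ k → 1 ≤ n → ∀ ε : ℝ, 0 < ε → ε ≤ 1 / 8 →
      (n : ℝ) * Real.log (1 + c₁ / 4) ≤ (k : ℝ) * Real.log (1 + (n : ℝ) * c₁ / (16 * k * ε)) →
      (n : ℝ) ≤ C * k * Real.log (1 / ε) := by
  set L := Real.log (1 + c₁ / 4) with hL
  have hLpos : 0 < L := Real.log_pos (by linarith)
  set E : ℝ := Real.log (4 / L) + L / 4 - 1 + Real.log (1 + c₁) with hE
  have hlog2 : 0 < Real.log 2 := Real.log_pos one_lt_two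
  clear_value L E
  refine ⟨4 / (3 * L) * (max E 0 / Real.log 2 + 1), by positivity, ?_⟩
  intro k n hk hn ε hε hε8 h
  have hkR : (0:ℝ) < k := by exact_mod_cast hk
  have hnR : (0:ℝ) < n := by exact_mod_cast hn
  set m : ℝ := (n : ℝ) / k with hm
  clear_value m
  have hmpos : 0 < m := by rw [hm]; positivity
  have hc16 : (0:ℝ) < c₁ / (16 * ε) := by positivity
  have hsplit : Real.log (1 + (n : ℝ) * c₁ / (16 * k * ε))
      ≤ Real.log (1 + m) + Real.log (1 + c₁ / (16 * ε)) := by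
    have h1 : 1 + (n : ℝ) * c₁ / (16 * k * ε) ≤ (1 + m) * (1 + c₁ / (16 * ε)) := by
      have he : (n : ℝ) * c₁ / (16 * k * ε) = m * (c₁ / (16 * ε)) := by
        rw [hm]; field_simp
      rw [he]
      nlinarith [mul_pos hmpos hc16]
    have hp : (0:ℝ) < 1 + (n : ℝ) * c₁ / (16 * k * ε) := by positivity
    have hq : (0:ℝ) < 1 + m := by positivity
    have hr : (0:ℝ) < 1 + c₁ / (16 * ε) := by positivity
    calc Real.log (1 + (n : ℝ) * c₁ / (16 * k * ε))
        ≤ Real.log ((1 + m) * (1 + c₁ / (16 * ε))) := Real.log_le_log hp h1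
    _ = Real.log (1 + m) + Real.log (1 + c₁ / (16 * ε)) := Real.log_mul hq.ne' hr.ne'
  have hstep2 : Real.log (1 + c₁ / (16 * ε)) ≤ Real.log (1 + c₁) + Real.log (1 / ε) := by
    have ha : (1:ℝ) ≤ 1 / ε := by rw [le_div_iff₀ hε]; linarith
    have hb : c₁ / (16 * ε) ≤ c₁ * (1 / ε) := by
      rw [mul_one_div, div_le_div_iff₀ (by positivity) hε]
      nlinarith
    have h1 : 1 + c₁ / (16 * ε) ≤ (1 + c₁) * (1 / ε) := by nlinarith
    have hp : (0:ℝ) < 1 + c₁ / (16 * ε) := by positivity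
    have hq : (0:ℝ) < 1 + c₁ := by linarith
    have hr : (0:ℝ) < 1 / ε := by positivity
    calc Real.log (1 + c₁ / (16 * ε)) ≤ Real.log ((1 + c₁) * (1 / ε)) := Real.log_le_log hp h1
    _ = Real.log (1 + c₁) + Real.log (1 / ε) := Real.log_mul hq.ne' hr.ne'
  have hstep3 : Real.log (1 + m) ≤ Real.log (4 / L) + L / 4 * (1 + m) - 1 := by
    have h1 : Real.log ((1 + m) * (L / 4)) ≤ (1 + m) * (L / 4) - 1 :=
      Real.log_le_sub_one_of_pos (by positivity)
    have hq : (0:ℝ) < 1 + m := by positivity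
    have hr : (0:ℝ) < L / 4 := by positivity
    rw [Real.log_mul hq.ne' hr.ne'] at h1
    have h2 : Real.log (L / 4) = - Real.log (4 / L) := by
      rw [← Real.log_inv]
      congr 1
      field_simp
    rw [h2] at h1
    linarith
  have hεlog : Real.log 2 ≤ Real.log (1 / ε) := by
    apply Real.log_le_log (by norm_num)
    rw [le_div_iff₀ hε]
    linarith
  have hlogε : 0 < Real.log (1 / ε) := lt_of_lt_of_le hlog2 hεlog
  have hElog : max E 0 ≤ max E 0 / Real.log 2 * Real.log (1 / ε) := by
    rw [div_mul_eq_mul_div, le_div_iff₀ hlog2]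
    have h0 : 0 ≤ max E 0 := le_max_right _ _
    nlinarith
  have hc : Real.log (1 + (n : ℝ) * c₁ / (16 * k * ε))
      ≤ L / 4 * m + E + Real.log (1 / ε) := by
    calc Real.log (1 + (n : ℝ) * c₁ / (16 * k * ε))
        ≤ Real.log (1 + m) + Real.log (1 + c₁ / (16 * ε)) := hsplit
    _ ≤ Real.log (1 + m) + (Real.log (1 + c₁) + Real.log (1 / ε)) := by linarith
    _ ≤ (Real.log (4 / L) + L / 4 * (1 + m) - 1) + (Real.log (1 + c₁) + Real.log (1 / ε)) := by
          linarith
    _ = L / 4 * m + E + Real.log (1 / ε) := by rw [hE]; ring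
  have hmain : (n : ℝ) * L ≤ (k : ℝ) * (L / 4 * m + E + Real.log (1 / ε)) :=
    le_trans h (mul_le_mul_of_nonneg_left hc (le_of_lt hkR))
  have hkm : (k : ℝ) * (L / 4 * m) = L / 4 * n := by
    rw [hm]; field_simp
  have hexp : (k : ℝ) * (L / 4 * m + E + Real.log (1 / ε))
      = (k : ℝ) * (L / 4 * m) + (k : ℝ) * (E + Real.log (1 / ε)) := by ring
  have h34 : 3 / 4 * L * n ≤ (k : ℝ) * (E + Real.log (1 / ε)) := by
    rw [hexp, hkm] at hmain
    linarith
  have hEe : E + Real.log (1 / ε) ≤ (max E 0 / Real.log 2 + 1) * Real.log (1 / ε) := by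
    have h0 : E ≤ max E 0 := le_max_left _ _
    have hrhs : (max E 0 / Real.log 2 + 1) * Real.log (1 / ε)
        = max E 0 / Real.log 2 * Real.log (1 / ε) + Real.log (1 / ε) := by ring
    rw [hrhs]
    linarith
  have hfin : 3 / 4 * L * n ≤ (k : ℝ) * ((max E 0 / Real.log 2 + 1) * Real.log (1 / ε)) :=
    le_trans h34 (mul_le_mul_of_nonneg_left hEe (le_of_lt hkR))
  have hpos : (0:ℝ) < 4 / (3 * L) := by positivity
  have hmul := mul_le_mul_of_nonneg_left hfin (le_of_lt hpos)
  have h43 : 4 / (3 * L) * (3 / 4 * L * (n:ℝ)) = n := by field_simp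
  rw [h43] at hmul
  calc (n : ℝ) ≤ 4 / (3 * L) * ((k : ℝ) * ((max E 0 / Real.log 2 + 1) * Real.log (1 / ε))) := hmul
  _ = 4 / (3 * L) * (max E 0 / Real.log 2 + 1) * k * Real.log (1 / ε) := by ring

lemma reduction_step {d k : ℕ} {μ : Measure (Fin d → ℝ)} {ν : Measure ℝ}
    [IsProbabilityMeasure μ] [IsProbabilityMeasure ν]
    (hx : ∀ᵐ x ∂μ, l2norm x ≤ 1) (he : ∀ᵐ e ∂ν, |e| ≤ 1 / 2) (hmean : ∫ e, e ∂ν = 0)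
    {c₁ : ℝ} (hc₁ : 0 < c₁)
    (hS1 : ((Matrix.of fun i j : Fin d => ∫ x, x i * x j ∂μ)
      - c₁ • (1 : Matrix (Fin d) (Fin d) ℝ)).PosSemidef)
    {ε : ℝ} (hε : 0 < ε)
    {n : ℕ} {B : Matrix (Fin d) (Fin k) ℝ} (hB : Bᵀ * B = 1)
    {w : Fin n → Fin k → ℝ} (hw : ∀ i, l2norm (w i) ≤ 1 / 2)
    (j : Fin n) (hj : regEpsIndepAt μ ν ε B w j) :
    ∃ r : Fin k → ℝ, (∑ t, r t ^ 2 ≤ 1) ∧ (2 * ε < (r ⬝ᵥ w j) ^ 2) ∧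
      (∑ i ∈ Finset.univ.filter (fun i : Fin n => i < j), (r ⬝ᵥ w i) ^ 2 ≤ 4 * ε / c₁) ∧
      ε < 1 / 8 := by
  obtain ⟨B', hB'unit, w', hw'norm, hsum, hfar⟩ := hj
  set q : Fin d → ℝ := B *ᵥ w j - B' *ᵥ (B'ᵀ *ᵥ (B *ᵥ w j)) with hqdef
  set Q : ℝ := ∑ t, q t ^ 2 with hQdef
  have hdotT : ∀ (A : Matrix (Fin d) (Fin k) ℝ) (z : Fin k → ℝ) (y : Fin d → ℝ),
      (Aᵀ *ᵥ y) ⬝ᵥ z = y ⬝ᵥ (A *ᵥ z) := by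
    intro A z y
    rw [dotProduct_comm, dot_mulVec_transpose, dotProduct_comm]
  have horto : ∀ z : Fin k → ℝ, q ⬝ᵥ (B' *ᵥ z) = 0 := by
    intro z
    rw [hqdef, sub_dotProduct, mulVec_dot_mulVec hB'unit, ← hdotT B' z (B *ᵥ w j), hdotT]
    ring
  have hqq : q ⬝ᵥ q = Q := dotProduct_self_eq q
  have hqu : q ⬝ᵥ (B *ᵥ w j) = Q := by
    have hdecomp : B *ᵥ w j = q + B' *ᵥ (B'ᵀ *ᵥ (B *ᵥ w j)) := by
      rw [hqdef]; abel
    rw [hdecomp, dotProduct_add, horto, hqq, add_zero]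
  have husq : ∑ t, (B *ᵥ w j) t ^ 2 ≤ 1 / 4 := by
    rw [← dotProduct_self_eq, mulVec_dot_mulVec hB, dotProduct_self_eq]
    have h := sumsq_le_of_l2norm (hw j)
    norm_num at h ⊢
    linarith
  have hQnn : 0 ≤ Q := hQdef ▸ sumsq_nonneg q
  have hQle : Q ≤ 1 / 4 := by
    have h1 : (q ⬝ᵥ (B *ᵥ w j)) ^ 2 ≤ Q * (1 / 4) := by
      calc (q ⬝ᵥ (B *ᵥ w j)) ^ 2 ≤ (∑ t, q t ^ 2) * (∑ t, (B *ᵥ w j) t ^ 2) :=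
            dot_sq_le _ _
      _ ≤ Q * (1 / 4) := by
            rw [← hQdef]
            exact mul_le_mul_of_nonneg_left husq hQnn
    rw [hqu] at h1
    nlinarith
  have hQlb : 2 * ε < Q := by
    set v : Fin k → ℝ := B'ᵀ *ᵥ (B *ᵥ w j) with hvdef
    have hvv : v ⬝ᵥ v = (B *ᵥ w j) ⬝ᵥ (B' *ᵥ v) := by rw [hvdef, hdotT]
    have hvsq : ∑ t, v t ^ 2 ≤ 1 / 4 := by
      have hBv : (B' *ᵥ v) ⬝ᵥ (B' *ᵥ v) = v ⬝ᵥ v := mulVec_dot_mulVec hB'unit v v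
      have hcs : ((B *ᵥ w j) ⬝ᵥ (B' *ᵥ v)) ^ 2
          ≤ (∑ t, (B *ᵥ w j) t ^ 2) * (∑ t, (B' *ᵥ v) t ^ 2) := dot_sq_le _ _
      have h2 : ∑ t, (B' *ᵥ v) t ^ 2 = ∑ t, v t ^ 2 := by
        rw [← dotProduct_self_eq, hBv, dotProduct_self_eq]
      rw [h2, ← hvv] at hcs
      have hvnn : 0 ≤ ∑ t, v t ^ 2 := sumsq_nonneg v
      rw [dotProduct_self_eq] at hcs
      nlinarith [husq]
    have hvnorm : l2norm v ≤ 1 / 2 := by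
      apply l2norm_le_of_sumsq (by norm_num)
      norm_num
      linarith
    have hfv := hfar v hvnorm
    rw [regExcess_eq hx he hmean] at hfv
    have hBvu : B' *ᵥ v - B *ᵥ w j = -q := by rw [hqdef, hvdef]; abel
    have hint : ∫ x, ((B' *ᵥ v - B *ᵥ w j) ⬝ᵥ x) ^ 2 ∂μ ≤ Q := by
      have hpt : ∀ x : Fin d → ℝ, ((B' *ᵥ v - B *ᵥ w j) ⬝ᵥ x) ^ 2 = (q ⬝ᵥ x) ^ 2 := by
        intro x; rw [hBvu, neg_dotProduct, neg_sq]
      simp_rw [hpt]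
      exact hQdef ▸ integral_dot_sq_le hx q
    linarith
  have hQpos : 0 < Q := lt_trans (by positivity) hQlb
  have hsq : 0 < Real.sqrt Q := Real.sqrt_pos.mpr hQpos
  have hsqQ : Real.sqrt Q ^ 2 = Q := Real.sq_sqrt hQnn
  set c : ℝ := (Real.sqrt Q)⁻¹ with hcdef
  have hc2 : c ^ 2 = Q⁻¹ := by rw [hcdef, inv_pow, hsqQ]
  have hrdot : ∀ a : Fin k → ℝ, (c • (Bᵀ *ᵥ q)) ⬝ᵥ a = c * (q ⬝ᵥ (B *ᵥ a)) := by
    intro a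
    rw [smul_dotProduct, hdotT B, smul_eq_mul]
  refine ⟨c • (Bᵀ *ᵥ q), ?_, ?_, ?_, by linarith⟩
  · -- norm bound
    have hzz : (Bᵀ *ᵥ q) ⬝ᵥ (Bᵀ *ᵥ q) ≤ Q := by
      have h1 : (Bᵀ *ᵥ q) ⬝ᵥ (Bᵀ *ᵥ q) = q ⬝ᵥ (B *ᵥ (Bᵀ *ᵥ q)) := hdotT B _ q
      have hBz : ∑ t, (B *ᵥ (Bᵀ *ᵥ q)) t ^ 2 = (Bᵀ *ᵥ q) ⬝ᵥ (Bᵀ *ᵥ q) := by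
        rw [← dotProduct_self_eq, mulVec_dot_mulVec hB]
      have hcs : (q ⬝ᵥ (B *ᵥ (Bᵀ *ᵥ q))) ^ 2
          ≤ (∑ t, q t ^ 2) * (∑ t, (B *ᵥ (Bᵀ *ᵥ q)) t ^ 2) := dot_sq_le _ _
      rw [hBz, ← hQdef] at hcs
      have hznn : 0 ≤ (Bᵀ *ᵥ q) ⬝ᵥ (Bᵀ *ᵥ q) := by
        rw [dotProduct_self_eq]; exact sumsq_nonneg _
      nlinarith [hcs, h1]
    have hrr : ∑ t, (c • (Bᵀ *ᵥ q)) t ^ 2 = c ^ 2 * ((Bᵀ *ᵥ q) ⬝ᵥ (Bᵀ *ᵥ q)) := by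
      rw [← dotProduct_self_eq, smul_dotProduct, dotProduct_smul]
      simp [smul_eq_mul]; ring
    rw [hrr, hc2]
    calc Q⁻¹ * ((Bᵀ *ᵥ q) ⬝ᵥ (Bᵀ *ᵥ q)) ≤ Q⁻¹ * Q :=
          mul_le_mul_of_nonneg_left hzz (by positivity)
    _ = 1 := inv_mul_cancel₀ hQpos.ne'
  · -- new direction
    rw [hrdot (w j), hqu, mul_pow, hc2]
    have : Q⁻¹ * Q ^ 2 = Q := by
      rw [pow_two, ← mul_assoc, inv_mul_cancel₀ hQpos.ne', one_mul]
    rw [this]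
    exact hQlb
  · -- independence sum
    have hterm : ∀ i : Fin n, ((c • (Bᵀ *ᵥ q)) ⬝ᵥ w i) ^ 2
        ≤ (4 / c₁) * regExcess μ ν B (w i) B' (w' i) := by
      intro i
      set a : Fin d → ℝ := B' *ᵥ w' i - B *ᵥ w i with hadef
      have hqa : q ⬝ᵥ (B *ᵥ w i) = - (q ⬝ᵥ a) := by
        rw [hadef, dotProduct_sub, horto]
        ring
      have hcs : (q ⬝ᵥ a) ^ 2 ≤ Q * (∑ t, a t ^ 2) := by
        have := dot_sq_le q a
        rw [← hQdef] at this
        exact this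
      have hlow : c₁ * (∑ t, a t ^ 2) ≤ 4 * regExcess μ ν B (w i) B' (w' i) := by
        rw [regExcess_eq hx he hmean]
        have heq := integral_dot_sq_eq hx a
        have hql := quadform_lower hS1 a
        rw [← heq] at hql
        rw [← hadef]
        linarith
      have hr2 : ((c • (Bᵀ *ᵥ q)) ⬝ᵥ w i) ^ 2 = Q⁻¹ * (q ⬝ᵥ a) ^ 2 := by
        rw [hrdot (w i), mul_pow, hc2, hqa, neg_sq]
      rw [hr2]
      calc Q⁻¹ * (q ⬝ᵥ a) ^ 2 ≤ Q⁻¹ * (Q * (∑ t, a t ^ 2)) :=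
            mul_le_mul_of_nonneg_left hcs (by positivity)
      _ = ∑ t, a t ^ 2 := by field_simp
      _ ≤ (4 / c₁) * regExcess μ ν B (w i) B' (w' i) := by
            rw [div_mul_eq_mul_div, le_div_iff₀ hc₁]
            linarith
    calc ∑ i ∈ Finset.univ.filter (fun i : Fin n => i < j), ((c • (Bᵀ *ᵥ q)) ⬝ᵥ w i) ^ 2
        ≤ ∑ i ∈ Finset.univ.filter (fun i : Fin n => i < j),
            (4 / c₁) * regExcess μ ν B (w i) B' (w' i) :=
          Finset.sum_le_sum fun i _ => hterm i
    _ = (4 / c₁) * ∑ i ∈ Finset.univ.filter (fun i : Fin n => i < j),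
            regExcess μ ν B (w i) B' (w' i) := by rw [Finset.mul_sum]
    _ ≤ (4 / c₁) * ε := by
          exact mul_le_mul_of_nonneg_left hsum (by positivity)
    _ = 4 * ε / c₁ := by ring

end aux

/-- Task-eluder dimension bound for noisy linear regression: if the second-moment matrix of `μ`
satisfies `c₁ I ⪯ Σ ⪯ c₂ I` and the noise `ν` is supported on `[-1/2, 1/2]` with mean zero,
then there is `C > 0` depending only on `c₁, c₂` such that every `ε`-independent task sequence
has length at most `C · k · log(1/ε)`, i.e. `dim(H, F, ε) ≤ C · k · log(1/ε)`. -/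
theorem task_eluder_dim_noisy_linear_regression (c₁ c₂ : ℝ) (hc₁ : 0 < c₁) (hc₁₂ : c₁ ≤ c₂) :
    ∃ C : ℝ, 0 < C ∧
      ∀ (d k : ℕ) (μ : Measure (Fin d → ℝ)), IsProbabilityMeasure μ →
      (∀ᵐ x ∂μ, l2norm x ≤ 1) →
      ∀ ν : Measure ℝ, IsProbabilityMeasure ν →
      (∀ᵐ e ∂ν, |e| ≤ 1 / 2) → (∫ e, e ∂ν = 0) →
      ((Matrix.of fun i j : Fin d => ∫ x, x i * x j ∂μ) -
          c₁ • (1 : Matrix (Fin d) (Fin d) ℝ)).PosSemidef →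
      (c₂ • (1 : Matrix (Fin d) (Fin d) ℝ) -
          Matrix.of fun i j : Fin d => ∫ x, x i * x j ∂μ).PosSemidef →
      ∀ ε : ℝ, 0 < ε → ε < 1 →
      ∀ (n : ℕ) (B : Matrix (Fin d) (Fin k) ℝ), Bᵀ * B = 1 →
      ∀ w : Fin n → Fin k → ℝ, (∀ i, l2norm (w i) ≤ 1 / 2) →
      (∀ j : Fin n, regEpsIndepAt μ ν ε B w j) →
      (n : ℝ) ≤ C * k * Real.log (1 / ε) := by
  obtain ⟨C, hC, hCprop⟩ := final_algebra c₁ hc₁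
  refine ⟨C, hC, ?_⟩
  intro d k μ hμ hx ν hν he hmean hS1 hS2 ε hε hε1 n B hB w hw hInd
  haveI := hμ
  haveI := hν
  have hlogε : 0 < Real.log (1 / ε) := Real.log_pos (by rw [lt_div_iff₀ hε, one_mul]; exact hε1)
  rcases Nat.eq_zero_or_pos n with hn0 | hn
  · subst hn0
    simp only [Nat.cast_zero]
    exact mul_nonneg (mul_nonneg hC.le (Nat.cast_nonneg k)) hlogε.le
  have hred := fun j : Fin n => reduction_step hx he hmean hc₁ hS1 hε hB hw j (hInd j)
  choose r hr1 hr2 hr3 hr4 using hred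
  have j0 : Fin n := ⟨0, hn⟩
  have hε8 : ε < 1 / 8 := hr4 ⟨0, hn⟩
  rcases Nat.eq_zero_or_pos k with hk0 | hk
  · exfalso
    have h := hr2 ⟨0, hn⟩
    have hz : (r ⟨0, hn⟩ ⬝ᵥ w ⟨0, hn⟩) = 0 := by
      subst hk0
      simp [dotProduct]
    rw [hz] at h
    nlinarith
  have hkR : (0:ℝ) < k := Nat.cast_pos.mpr hk
  have hα : 0 < 4 * ε / c₁ := by positivity
  have hβ : 0 < 2 * ε := by positivity
  have hwsq : ∀ i, ∑ t, w i t ^ 2 ≤ 1 / 4 := by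
    intro i
    have h := sumsq_le_of_l2norm (hw i)
    norm_num at h ⊢
    linarith
  have hell := elliptic_potential hα hβ w hwsq r hr1 hr3 hr2
  have e1 : 1 + 2 * ε / (2 * (4 * ε / c₁)) = 1 + c₁ / 4 := by
    field_simp
  have e2 : 1 + (n : ℝ) / (4 * k * (4 * ε / c₁)) = 1 + (n : ℝ) * c₁ / (16 * k * ε) := by
    field_simp
    ring
  rw [e1, e2] at hell
  exact hCprop k n hk hn ε hε hε8.le hell
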